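/- In A(α,β,γ), with e := xz − q²β/(q²−1) and f := yz + γ/(q²−1), for every positive integer a one has f e^a = q^{2a} e^a f − ((q^{-2a}−1)/(q^{-2}−1)) α z² e^{a−1} + (q²βγ(q^{2a}−1)/(q²−1)²) e^{a−1}. -/

import Mathlib

noncomputable section

open FreeAlgebra

/-- The defining relations of the 3-cyclic quantum Weyl algebra `A(α,β,γ)`:
`xy = q²yx + α`, `xz = q⁻²zx + β`, `yz = q²zy + γ`. -/
inductive CQWRel (K : Type) [Field K] (q α β γ : K) :
    FreeAlgebra K (Fin 3) → FreeAlgebra K (Fin 3) → Prop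
  | xy : CQWRel K q α β γ (ι K (0 : Fin 3) * ι K 1)
      (q ^ 2 • (ι K (1 : Fin 3) * ι K 0) + algebraMap K _ α)
  | xz : CQWRel K q α β γ (ι K (0 : Fin 3) * ι K 2)
      (q⁻¹ ^ 2 • (ι K (2 : Fin 3) * ι K 0) + algebraMap K _ β)
  | yz : CQWRel K q α β γ (ι K (1 : Fin 3) * ι K 2)
      (q ^ 2 • (ι K (2 : Fin 3) * ι K 1) + algebraMap K _ γ)

/-- The 3-cyclic quantum Weyl algebra `A(α,β,γ)`. -/
abbrev CQW (K : Type) [Field K] (q α β γ : K) := RingQuot (CQWRel K q α β γ)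

variable {K : Type} [Field K]

/-- The generator `x` of `A(α,β,γ)`. -/
def Xg (q α β γ : K) : CQW K q α β γ := RingQuot.mkAlgHom K (CQWRel K q α β γ) (ι K 0)

/-- The generator `y` of `A(α,β,γ)`. -/
def Yg (q α β γ : K) : CQW K q α β γ := RingQuot.mkAlgHom K (CQWRel K q α β γ) (ι K 1)

/-- The generator `z` of `A(α,β,γ)`. -/
def Zg (q α β γ : K) : CQW K q α β γ := RingQuot.mkAlgHom K (CQWRel K q α β γ) (ι K 2)

/-- The element `e = xz - q²β/(q²-1)` of `A(α,β,γ)`. -/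
def eElt (q α β γ : K) : CQW K q α β γ :=
  Xg q α β γ * Zg q α β γ - algebraMap K (CQW K q α β γ) (q ^ 2 * β / (q ^ 2 - 1))

/-- The element `f = yz + γ/(q²-1)` of `A(α,β,γ)`. -/
def fElt (q α β γ : K) : CQW K q α β γ :=
  Yg q α β γ * Zg q α β γ + algebraMap K (CQW K q α β γ) (γ / (q ^ 2 - 1))

section
variable (q α β γ : K)

local notation "X" => Xg q α β γ
local notation "Y" => Yg q α β γ
local notation "Z" => Zg q α β γ
local notation "A" => CQW K q α β γ

lemma rel_xy : X * Y = q ^ 2 • (Y * X) + algebraMap K A α := by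
  have h := RingQuot.mkAlgHom_rel K (CQWRel.xy (K := K) (q := q) (α := α) (β := β) (γ := γ))
  simpa [Xg, Yg, map_mul, map_add, map_smul] using h

lemma rel_xz : X * Z = q⁻¹ ^ 2 • (Z * X) + algebraMap K A β := by
  have h := RingQuot.mkAlgHom_rel K (CQWRel.xz (K := K) (q := q) (α := α) (β := β) (γ := γ))
  simpa [Xg, Zg, map_mul, map_add, map_smul] using h

lemma rel_yz : Y * Z = q ^ 2 • (Z * Y) + algebraMap K A γ := by
  have h := RingQuot.mkAlgHom_rel K (CQWRel.yz (K := K) (q := q) (α := α) (β := β) (γ := γ))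
  simpa [Yg, Zg, map_mul, map_add, map_smul] using h

lemma rel_zx (hq : q ≠ 0) : Z * X = q ^ 2 • (X * Z) - (q ^ 2 * β) • (1 : A) := by
  rw [rel_xz q α β γ, Algebra.algebraMap_eq_smul_one]
  match_scalars <;> field_simp <;> ring

lemma rel_yx (hq : q ≠ 0) : Y * X = q⁻¹ ^ 2 • (X * Y) - (q⁻¹ ^ 2 * α) • (1 : A) := by
  rw [rel_xy q α β γ, Algebra.algebraMap_eq_smul_one]
  match_scalars <;> field_simp <;> ring

lemma rel_zy (hq : q ≠ 0) : Z * Y = q⁻¹ ^ 2 • (Y * Z) - (q⁻¹ ^ 2 * γ) • (1 : A) := by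
  rw [rel_yz q α β γ, Algebra.algebraMap_eq_smul_one]
  match_scalars <;> field_simp <;> ring

lemma rel_zx' (hq : q ≠ 0) (w : A) :
    Z * (X * w) = q ^ 2 • (X * (Z * w)) - (q ^ 2 * β) • w := by
  rw [← mul_assoc, rel_zx q α β γ hq, sub_mul, smul_mul_assoc, smul_mul_assoc, one_mul, mul_assoc]

lemma rel_yx' (hq : q ≠ 0) (w : A) :
    Y * (X * w) = q⁻¹ ^ 2 • (X * (Y * w)) - (q⁻¹ ^ 2 * α) • w := by
  rw [← mul_assoc, rel_yx q α β γ hq, sub_mul, smul_mul_assoc, smul_mul_assoc, one_mul, mul_assoc]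

lemma rel_zy' (hq : q ≠ 0) (w : A) :
    Z * (Y * w) = q⁻¹ ^ 2 • (Y * (Z * w)) - (q⁻¹ ^ 2 * γ) • w := by
  rw [← mul_assoc, rel_zy q α β γ hq, sub_mul, smul_mul_assoc, smul_mul_assoc, one_mul, mul_assoc]

local notation "E" => eElt q α β γ
local notation "F" => fElt q α β γ

/-- `z e = q² e z`. -/
lemma rel_ze (hq : q ≠ 0) (hq2 : q ^ 2 ≠ 1) : Z * E = q ^ 2 • (E * Z) := by
  have h1 : q ^ 2 - 1 ≠ 0 := sub_ne_zero.mpr hq2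
  have h2 : (-1 : K) + q ^ 2 ≠ 0 := by rwa [neg_add_eq_sub]
  simp only [eElt, Algebra.algebraMap_eq_smul_one]
  simp only [mul_assoc, rel_zx q α β γ hq, rel_zx' q α β γ hq,
    rel_yx q α β γ hq, rel_yx' q α β γ hq, rel_zy q α β γ hq, rel_zy' q α β γ hq,
    smul_add, smul_sub, smul_smul, mul_add, add_mul, mul_sub, sub_mul,
    mul_smul_comm, smul_mul_assoc, mul_one, one_mul]
  match_scalars
  any_goals ring1
  all_goals field_simp [h2]
  all_goals ring1

/-- `f e = q² e f - α z² + (q²βγ/(q²-1)) 1`. -/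
lemma rel_fe (hq : q ≠ 0) (hq2 : q ^ 2 ≠ 1) :
    F * E = q ^ 2 • (E * F) - α • (Z ^ 2) +
      (q ^ 2 * β * γ / (q ^ 2 - 1)) • (1 : A) := by
  have h1 : q ^ 2 - 1 ≠ 0 := sub_ne_zero.mpr hq2
  have h2 : (-1 : K) + q ^ 2 ≠ 0 := by rwa [neg_add_eq_sub]
  have h3 : (1 : K) - q ^ 2 * 2 + q ^ 4 ≠ 0 := by
    have h4 := pow_ne_zero 2 h1
    intro hc; exact h4 (by linear_combination hc)
  simp only [eElt, fElt, Algebra.algebraMap_eq_smul_one]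
  simp only [pow_two, mul_assoc, rel_zx q α β γ hq, rel_zx' q α β γ hq,
    rel_yx q α β γ hq, rel_yx' q α β γ hq, rel_zy q α β γ hq, rel_zy' q α β γ hq,
    smul_add, smul_sub, smul_smul, mul_add, add_mul, mul_sub, sub_mul,
    mul_smul_comm, smul_mul_assoc, mul_one, one_mul]
  have hqq : q * q - 1 ≠ 0 := by rw [← pow_two]; exact h1
  match_scalars
  any_goals ring1
  all_goals field_simp [h2, h3]
  all_goals ring1

lemma rel_zen (hq : q ≠ 0) (hq2 : q ^ 2 ≠ 1) (n : ℕ) :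
    Z * E ^ n = q ^ (2 * n) • (E ^ n * Z) := by
  induction n with
  | zero => simp
  | succ n ih =>
      rw [pow_succ, ← mul_assoc, ih, smul_mul_assoc, mul_assoc, rel_ze q α β γ hq hq2,
        mul_smul_comm, smul_smul, ← mul_assoc, ← pow_succ]
      ring_nf

lemma rel_z2en (hq : q ≠ 0) (hq2 : q ^ 2 ≠ 1) (n : ℕ) :
    Z ^ 2 * E ^ n = q ^ (4 * n) • (E ^ n * Z ^ 2) := by
  have h := rel_zen q α β γ hq hq2 n
  calc Z ^ 2 * E ^ n = Z * (Z * E ^ n) := by rw [pow_two, mul_assoc]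
    _ = Z * (q ^ (2 * n) • (E ^ n * Z)) := by rw [h]
    _ = q ^ (2 * n) • ((Z * E ^ n) * Z) := by rw [mul_smul_comm, mul_assoc]
    _ = q ^ (2 * n) • ((q ^ (2 * n) • (E ^ n * Z)) * Z) := by rw [h]
    _ = q ^ (4 * n) • (E ^ n * Z ^ 2) := by
        rw [smul_mul_assoc, smul_smul, ← pow_add, mul_assoc, ← pow_two]
        ring_nf

end

theorem stmt7 (q α β γ : K) (hq : q ≠ 0) (hq2 : q ^ 2 ≠ 1) (a : ℕ) (ha : 0 < a) :
    fElt q α β γ * eElt q α β γ ^ a =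
      q ^ (2 * a) • (eElt q α β γ ^ a * fElt q α β γ) -
        ((q⁻¹ ^ (2 * a) - 1) / (q⁻¹ ^ 2 - 1) * α) •
          (Zg q α β γ ^ 2 * eElt q α β γ ^ (a - 1)) +
        (q ^ 2 * β * γ * (q ^ (2 * a) - 1) / (q ^ 2 - 1) ^ 2) • eElt q α β γ ^ (a - 1) := by
  have h1 : q ^ 2 - 1 ≠ 0 := sub_ne_zero.mpr hq2
  have hqi : q⁻¹ ^ 2 - 1 ≠ 0 := by
    refine sub_ne_zero.mpr ?_
    simp [inv_pow, inv_eq_one, hq2]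
  induction a, ha using Nat.le_induction with
  | base =>
      have hc : (q⁻¹ ^ (2 * 1) - 1) / (q⁻¹ ^ 2 - 1) * α = α := by
        rw [mul_one, div_self hqi, one_mul]
      have hd : q ^ 2 * β * γ * (q ^ (2 * 1) - 1) / (q ^ 2 - 1) ^ 2
          = q ^ 2 * β * γ / (q ^ 2 - 1) := by
        rw [mul_one]
        field_simp [h1]
        try ring
      rw [hc, hd]
      simp only [pow_one, Nat.sub_self, pow_zero, mul_one]
      rw [rel_fe q α β γ hq hq2]
  | succ a ha ih =>
      have hx : q ^ (2 * a) * q⁻¹ ^ (4 * a) = q⁻¹ ^ (2 * a) := by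
        rw [inv_pow, inv_pow]
        rw [eq_comm, inv_eq_iff_eq_inv, eq_comm, inv_eq_iff_eq_inv, eq_comm]
        field_simp [pow_ne_zero _ hq]
        ring
      have key : ∀ w : K, w ^ 2 - 1 ≠ 0 →
          (w ^ (2 * (a + 1)) - 1) / (w ^ 2 - 1) * α
            = (w ^ (2 * a) - 1) / (w ^ 2 - 1) * α + w ^ (2 * a) * α := by
        intro w hw
        field_simp [hw]
        ring
      have hc2 : (q⁻¹ ^ (2 * (a + 1)) - 1) / (q⁻¹ ^ 2 - 1) * α
          = (q⁻¹ ^ (2 * a) - 1) / (q⁻¹ ^ 2 - 1) * α + q ^ (2 * a) * q⁻¹ ^ (4 * a) * α := by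
        rw [hx]
        exact key q⁻¹ hqi
      have hd2 : q ^ 2 * β * γ * (q ^ (2 * (a + 1)) - 1) / (q ^ 2 - 1) ^ 2
          = q ^ 2 * β * γ * (q ^ (2 * a) - 1) / (q ^ 2 - 1) ^ 2 +
            q ^ (2 * a) * (q ^ 2 * β * γ / (q ^ 2 - 1)) := by
        field_simp [h1]
        ring
      have hE : eElt q α β γ ^ (a - 1) * eElt q α β γ = eElt q α β γ ^ a := by
        rw [← pow_succ, Nat.sub_add_cancel ha]
      have hZ : eElt q α β γ ^ a * Zg q α β γ ^ 2 =
          (q⁻¹ ^ (4 * a)) • (Zg q α β γ ^ 2 * eElt q α β γ ^ a) := by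
        rw [rel_z2en q α β γ hq hq2 a, smul_smul, inv_pow, inv_mul_cancel₀
          (pow_ne_zero _ hq), one_smul]
      have hL : fElt q α β γ * eElt q α β γ ^ (a + 1) =
          (fElt q α β γ * eElt q α β γ ^ a) * eElt q α β γ := by
        rw [pow_succ, mul_assoc]
      rw [hL, ih, Nat.add_sub_cancel, hc2, hd2]
      simp only [sub_mul, add_mul, smul_mul_assoc, mul_assoc, hE]
      rw [rel_fe q α β γ hq hq2]
      simp only [mul_add, mul_sub, mul_smul_comm, smul_smul, mul_one, smul_add, smul_sub]
      rw [hZ]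
      simp only [pow_succ, mul_assoc]
      module
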